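/- Let n, k, r ≥ 1, let u_{i,ℓ} ∈ ℝ^n for i ∈ {1,…,k} and ℓ ∈ {1,…,r}, and define R : [n]^k → ℝ by R_j = Σ_{ℓ=1}^r Π_{i=1}^k [u_{i,ℓ}]_{j_i}. Let R_max := max_{j ∈ [n]^k} |R_j|, let η > 0, let ε̃ > 0, and let q be a real polynomial of degree at most m such that |e^{−η x} − q(x)| ≤ ε̃ for all x ∈ [−R_max, R_max]. Define L : [n]^k → ℝ by L_j := q(R_j). Then: (i) max_{j ∈ [n]^k} |L_j − e^{−η R_j}| ≤ ε̃; and (ii) there exist N ≤ binom(r + m, r) and vectors v_{i,ℓ} ∈ ℝ^n for i ∈ {1,…,k}, ℓ ∈ {1,…,N}, such that L_j = Σ_{ℓ=1}^N Π_{i=1}^k [v_{i,ℓ}]_{j_i} for all j ∈ [n]^k. -/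

import Mathlib

private lemma multiset_prod_map_prod {k r : ℕ} (s : Multiset (Fin r))
    (g : Fin k → Fin r → ℝ) :
    (s.map (fun ℓ => ∏ i : Fin k, g i ℓ)).prod = ∏ i : Fin k, (s.map (g i)).prod := by
  induction s using Multiset.induction_on with
  | empty => simp
  | cons a s ih => simp [ih, Finset.prod_mul_distrib]

/-- Low-rank approximation of the entrywise exponential of a rank-`r` tensor:
if `q` is a polynomial of degree at most `m` with `|e^{-ηx} - q(x)| ≤ ε̃` on
`[-R_max, R_max]`, then `L_j := q(R_j)` satisfies `|L_j - e^{-η R_j}| ≤ ε̃`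
entrywise, and `L` admits a rank-`N` factorization with `N ≤ binom(r + m, r)`. -/
theorem lowrank_approx_of_exp (n k r : ℕ) (hn : 0 < n) (hk : 0 < k) (hr : 0 < r)
    (u : Fin k → Fin r → Fin n → ℝ)
    (R : (Fin k → Fin n) → ℝ)
    (hR : ∀ j, R j = ∑ ℓ : Fin r, ∏ i : Fin k, u i ℓ (j i))
    (Rmax : ℝ) (hRmax : Rmax = ⨆ j : Fin k → Fin n, |R j|)
    (η : ℝ) (hη : 0 < η) (εt : ℝ) (hεt : 0 < εt)
    (m : ℕ) (q : Polynomial ℝ) (hqdeg : q.natDegree ≤ m)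
    (hq : ∀ x ∈ Set.Icc (-Rmax) Rmax, |Real.exp (-η * x) - q.eval x| ≤ εt)
    (L : (Fin k → Fin n) → ℝ) (hL : ∀ j, L j = q.eval (R j)) :
    (∀ j : Fin k → Fin n, |L j - Real.exp (-η * R j)| ≤ εt) ∧
    ∃ N : ℕ, N ≤ Nat.choose (r + m) r ∧
      ∃ v : Fin k → Fin N → Fin n → ℝ,
        ∀ j : Fin k → Fin n, L j = ∑ ℓ : Fin N, ∏ i : Fin k, v i ℓ (j i) := by
  have hne : Nonempty (Fin k → Fin n) := ⟨fun _ => ⟨0, hn⟩⟩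
  constructor
  · intro j
    have hmem : R j ∈ Set.Icc (-Rmax) Rmax := by
      have hb : BddAbove (Set.range fun j : Fin k → Fin n => |R j|) :=
        Set.Finite.bddAbove (Set.finite_range _)
      have h1 : |R j| ≤ Rmax := hRmax ▸ le_ciSup hb j
      exact Set.mem_Icc.mpr (abs_le.mp h1)
    rw [hL j, abs_sub_comm]
    exact hq (R j) hmem
  · -- index type
    set T := Σ d : Fin (m + 1), Sym (Fin r) d with hT
    have hcard : Fintype.card T = (r + m).choose r := by
      rw [Fintype.card_sigma,
        Fin.sum_univ_eq_sum_range (fun d => Fintype.card (Sym (Fin r) d))]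
      have h1 : ∀ d : ℕ, Fintype.card (Sym (Fin r) d) = (d + (r - 1)).choose (r - 1) := by
        intro d
        rw [Sym.card_sym_eq_choose, Fintype.card_fin,
          show r + d - 1 = d + (r - 1) by omega, Nat.choose_symm_add]
      rw [Finset.sum_congr rfl (fun d _ => h1 d), Nat.sum_range_add_choose m (r - 1),
        show m + (r - 1) + 1 = r + m by omega, show r - 1 + 1 = r by omega]
    refine ⟨Fintype.card T, hcard.le, ?_⟩
    obtain e := (Fintype.equivFin T).symm
    refine ⟨fun i ℓ x => (if i = ⟨0, hk⟩ then q.coeff (e ℓ).1 * ((e ℓ).2 : Sym (Fin r) (e ℓ).1).1.countPerms else 1)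
      * (((e ℓ).2 : Sym (Fin r) (e ℓ).1).1.map (fun s => u i s x)).prod, ?_⟩
    intro j
    have expand : L j = ∑ t : T,
        (q.coeff t.1 * (t.2 : Sym (Fin r) t.1).1.countPerms)
          * ((t.2 : Sym (Fin r) t.1).1.map (fun ℓ => ∏ i : Fin k, u i ℓ (j i))).prod := by
      rw [hL j, Polynomial.eval_eq_sum_range' (Nat.lt_succ_of_le hqdeg),
        ← Fin.sum_univ_eq_sum_range (fun d => q.coeff d * R j ^ d),
        show (Finset.univ : Finset T) =
          (Finset.univ : Finset (Fin (m + 1))).sigma (fun _ => Finset.univ)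
          from Finset.univ_sigma_univ.symm, Finset.sum_sigma]
      refine Finset.sum_congr rfl fun d _ => ?_
      have hpow : R j ^ (d : ℕ) =
          ∑ α ∈ (Finset.univ : Finset (Fin r)).sym d,
            (α.1.countPerms : ℝ) * (α.1.map (fun ℓ => ∏ i : Fin k, u i ℓ (j i))).prod := by
        rw [hR j, Finset.sum_pow]
      rw [hpow, Finset.sym_univ, Finset.mul_sum]
      refine Finset.sum_congr rfl fun α _ => by ring
    rw [expand, ← Equiv.sum_comp e]
    refine Finset.sum_congr rfl fun ℓ _ => ?_
    rw [Finset.prod_mul_distrib, Finset.prod_ite_eq' Finset.univ (⟨0, hk⟩ : Fin k)]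
    simp only [Finset.mem_univ, if_true]
    rw [← multiset_prod_map_prod]
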